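/- Let F be a field, L = F[z₁,z₁⁻¹,...,z_n,z_n⁻¹], and C a bounded chain complex of finitely generated projective L-modules such that every homology group H_k(C) is finite-dimensional over F. Then for each j, the complex C ⊗_{F[z_j,z_j⁻¹]} F(z_j) is acyclic, where F(z_j) is the field of rational functions. -/

import Mathlib

open CategoryTheory LaurentPolynomial

/-- The canonical ring homomorphism `F[z,z⁻¹] → F(z)` sending `z` to `X`. -/
noncomputable def laurentToRatFunc (F : Type) [Field F] :
    LaurentPolynomial F →+* RatFunc F :=
  ((AddMonoidAlgebra.lift F (RatFunc F) ℤ)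
    ((Units.coeHom (RatFunc F)).comp
      (zpowersHom (RatFunc F)ˣ (Units.mk0 (RatFunc.X) RatFunc.X_ne_zero)))).toRingHom

/-- The ring homomorphism `F[z_j,z_j⁻¹] → F[z₁,z₁⁻¹,...,z_n,z_n⁻¹]` sending `z` to `z_j`,
where the multivariate Laurent polynomial ring is `AddMonoidAlgebra F (Fin n → ℤ)`. -/
noncomputable def laurentVar (F : Type) [Field F] (n : ℕ) (j : Fin n) :
    LaurentPolynomial F →+* AddMonoidAlgebra F (Fin n → ℤ) :=
  AddMonoidAlgebra.mapDomainRingHom F (AddMonoidHom.single (fun _ : Fin n => ℤ) j)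

set_option maxRecDepth 8000
set_option maxHeartbeats 1000000
set_option synthInstance.maxHeartbeats 400000

lemma lr_single (F : Type) [Field F] (m : ℤ) (a : F) :
    laurentToRatFunc F (AddMonoidAlgebra.single m a) = a • (RatFunc.X : RatFunc F) ^ m := by
  show ((AddMonoidAlgebra.lift F (RatFunc F) ℤ) _) (AddMonoidAlgebra.single m a) = _
  rw [AddMonoidAlgebra.lift_single]
  congr 1
  show ((Units.mk0 (RatFunc.X : RatFunc F) RatFunc.X_ne_zero) ^ m : (RatFunc F)ˣ).val = _
  rw [Units.val_zpow_eq_zpow_val]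
  rfl

lemma lr_T (F : Type) [Field F] (m : ℤ) :
    laurentToRatFunc F (T m) = (RatFunc.X : RatFunc F) ^ m := by
  rw [T, lr_single, one_smul]

lemma lr_C (F : Type) [Field F] (a : F) :
    laurentToRatFunc F (C a) = algebraMap F (RatFunc F) a := by
  rw [LaurentPolynomial.C]
  show laurentToRatFunc F (AddMonoidAlgebra.single (0 : ℤ) a) = _
  rw [lr_single, zpow_zero, Algebra.algebraMap_eq_smul_one]

lemma lr_toLaurent (F : Type) [Field F] (p : Polynomial F) :
    laurentToRatFunc F (Polynomial.toLaurent p) = algebraMap (Polynomial F) (RatFunc F) p := by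
  have : (laurentToRatFunc F).comp (Polynomial.toLaurent) = algebraMap (Polynomial F) (RatFunc F) := by
    apply Polynomial.ringHom_ext
    · intro a
      simp only [RingHom.coe_comp, Function.comp_apply, Polynomial.toLaurent_C, lr_C]
      rw [RatFunc.algebraMap_C]
      rfl
    · simp only [RingHom.coe_comp, Function.comp_apply, Polynomial.toLaurent_X, lr_T, zpow_one]
      rw [RatFunc.algebraMap_X]
  exact DFunLike.congr_fun this p

lemma lr_injective (F : Type) [Field F] : Function.Injective (laurentToRatFunc F) := by
  rw [injective_iff_map_eq_zero]
  intro f hf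
  obtain ⟨n, f', hf'⟩ := f.exists_T_pow
  have h2 : algebraMap (Polynomial F) (RatFunc F) f' = 0 := by
    rw [← lr_toLaurent, hf', map_mul, hf, zero_mul]
  have h3 : f' = 0 := RatFunc.algebraMap_injective F (by rw [h2, map_zero])
  have : f * T (n : ℤ) = 0 := by rw [← hf', h3, map_zero]
  have hu := isUnit_T (R := F) (n : ℤ)
  obtain ⟨u, hu⟩ := hu
  rwa [← hu, Units.mul_left_eq_zero] at this

noncomputable instance ratAlg (F : Type) [Field F] : Algebra (LaurentPolynomial F) (RatFunc F) :=
  (laurentToRatFunc F).toAlgebra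

example (F : Type) [Field F] :
    (Module.compHom (RatFunc F) (laurentToRatFunc F) : Module (LaurentPolynomial F) (RatFunc F))
      = (ratAlg F).toModule := rfl

lemma lr_algebraMap (F : Type) [Field F] :
    algebraMap (LaurentPolynomial F) (RatFunc F) = laurentToRatFunc F := rfl

instance lr_isLoc (F : Type) [Field F] :
    IsLocalization (nonZeroDivisors (LaurentPolynomial F)) (RatFunc F) where
  map_units := by
    rintro ⟨b, hb⟩
    have hb0 : b ≠ 0 := nonZeroDivisors.ne_zero hb
    exact IsUnit.mk0 _ (by
      rw [lr_algebraMap]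
      exact fun h => hb0 (lr_injective F (by rw [h, map_zero])))
  surj := by
    intro z
    refine ⟨⟨Polynomial.toLaurent z.num, ⟨Polynomial.toLaurent z.denom, ?_⟩⟩, ?_⟩
    · exact mem_nonZeroDivisors_of_ne_zero (by
        simpa using z.denom_ne_zero)
    · rw [lr_algebraMap]
      simp only [lr_toLaurent]
      have hne : algebraMap (Polynomial F) (RatFunc F) z.denom ≠ 0 :=
        RatFunc.algebraMap_ne_zero z.denom_ne_zero
      have h := RatFunc.num_div_denom z
      rw [div_eq_iff hne] at h
      exact h.symm
  exists_of_eq := by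
    intro x y h
    rw [lr_algebraMap] at h
    exact ⟨1, by rw [lr_injective F h]⟩

instance lr_flat (F : Type) [Field F] : Module.Flat (LaurentPolynomial F) (RatFunc F) :=
  IsLocalization.flat _ (nonZeroDivisors (LaurentPolynomial F))


lemma lv_C (F : Type) [Field F] (n : ℕ) (j : Fin n) (a : F) :
    laurentVar F n j (C a) = algebraMap F (AddMonoidAlgebra F (Fin n → ℤ)) a := by
  rw [laurentVar, AddMonoidAlgebra.coe_algebraMap]
  show AddMonoidAlgebra.mapDomain _ (AddMonoidAlgebra.single 0 a) = _
  rw [AddMonoidAlgebra.mapDomain_single]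
  simp

lemma ann (F : Type) [Field F] (n : ℕ) (j : Fin n) (M : Type*) [AddCommGroup M]
    [Module (AddMonoidAlgebra F (Fin n → ℤ)) M]
    (hfd : Module.Finite F (RestrictScalars F (AddMonoidAlgebra F (Fin n → ℤ)) M)) :
    ∃ q : LaurentPolynomial F, q ≠ 0 ∧ ∀ m : M, (laurentVar F n j q) • m = 0 := by
  set A := AddMonoidAlgebra F (Fin n → ℤ) with hA
  letI : Module F M := Module.compHom M (algebraMap F A)
  haveI hfin : FiniteDimensional F M := hfd
  set x : A := laurentVar F n j (T 1) with hx
  have hsmul : ∀ (r : F) (v : M), r • v = algebraMap F A r • v := fun r v => rfl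
  let e : M →ₗ[F] M :=
    { toFun := fun v => x • v
      map_add' := fun v w => smul_add x v w
      map_smul' := fun r v => by
        simp only [RingHom.id_apply]
        rw [hsmul, hsmul, smul_smul, smul_smul, mul_comm] }
  have epow : ∀ (i : ℕ) (v : M), (e ^ i) v = x ^ i • v := by
    intro i
    induction i with
    | zero => intro v; simp
    | succ i ih =>
      intro v
      rw [pow_succ, pow_succ, Module.End.mul_apply, ih]
      show x ^ i • (x • v) = _
      rw [smul_smul]
  have key : ∀ (p : Polynomial F) (v : M),
      (laurentVar F n j (Polynomial.toLaurent p)) • v = ((Polynomial.aeval e) p) v := by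
    intro p
    induction p using Polynomial.induction_on' with
    | add p q hp hq =>
      intro v
      rw [map_add, map_add, add_smul, hp, hq, map_add, LinearMap.add_apply]
    | monomial i a =>
      intro v
      rw [Polynomial.toLaurent_C_mul_T, map_mul, lv_C]
      have hT : laurentVar F n j (T (i : ℤ)) = x ^ i := by
        rw [hx, ← map_pow]
        congr 1
        rw [T_pow, mul_one]
      rw [hT, Polynomial.aeval_monomial, mul_smul, Module.End.mul_apply, epow]
      rw [← hsmul, Module.algebraMap_end_apply]
  have hmonic := LinearMap.charpoly_monic e
  refine ⟨Polynomial.toLaurent (LinearMap.charpoly e), ?_, ?_⟩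
  · simp only [ne_eq, Polynomial.toLaurent_eq_zero]
    exact hmonic.ne_zero
  · intro m
    rw [key _ m, LinearMap.aeval_self_charpoly]
    rfl

noncomputable instance rsPFL {R S : Type} [Ring R] [Ring S] (f : R →+* S) :
    Limits.PreservesFiniteLimits (ModuleCat.restrictScalars f) :=
  ⟨fun _ _ _ => ⟨fun {_} => inferInstance⟩⟩

noncomputable instance rsPFC {R S : Type} [Ring R] [Ring S] (f : R →+* S) :
    Limits.PreservesFiniteColimits (ModuleCat.restrictScalars f) :=
  ⟨fun _ _ _ => ⟨fun {_} => inferInstance⟩⟩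

noncomputable instance krFlat (F : Type) [Field F] :
    Module.Flat (LaurentPolynomial F)
      ((ModuleCat.restrictScalars (laurentToRatFunc F)).obj (ModuleCat.of _ (RatFunc F))) :=
  lr_flat F

lemma tensor_zero {B : Type} [CommRing B] (K' : Type) [AddCommGroup K'] [Module B K']
    (N : Type*) [AddCommGroup N] [Module B N] (q : B)
    (hq : ∀ y : K', ∃ z : K', q • z = y) (hann : ∀ m : N, q • m = 0) :
    Subsingleton (TensorProduct B K' N) := by
  constructor
  intro u v
  suffices h : ∀ w : TensorProduct B K' N, w = 0 by rw [h u, h v]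
  intro w
  induction w using TensorProduct.induction_on with
  | zero => rfl
  | tmul s m =>
    obtain ⟨z, hz⟩ := hq s
    rw [← hz, TensorProduct.smul_tmul, hann, TensorProduct.tmul_zero]
  | add w₁ w₂ h₁ h₂ => rw [h₁, h₂, add_zero]


/-- If `C` is a bounded chain complex of finitely generated projective
modules over `L = F[z₁,z₁⁻¹,...,z_n,z_n⁻¹]` with all homology groups finite-dimensional
over `F`, then for each `j` the complex `C ⊗_{F[z_j,z_j⁻¹]} F(z_j)` is acyclic. -/
theorem stmt15 (F : Type) [Field F] (n : ℕ)
    (C : ChainComplex (ModuleCat (AddMonoidAlgebra F (Fin n → ℤ))) ℤ)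
    (a b : ℤ) (hbd : ∀ k, k < a ∨ b < k → Subsingleton (C.X k))
    (hfg : ∀ k, Module.Finite (AddMonoidAlgebra F (Fin n → ℤ)) (C.X k))
    (hproj : ∀ k, Module.Projective (AddMonoidAlgebra F (Fin n → ℤ)) (C.X k))
    (hfd : ∀ k : ℤ, Module.Finite F
      (RestrictScalars F (AddMonoidAlgebra F (Fin n → ℤ)) (C.homology k))) :
    ∀ j : Fin n, ∀ k : ℤ,
      ((((ModuleCat.restrictScalars (laurentVar F n j) ⋙
        ModuleCat.extendScalars (laurentToRatFunc F)).mapHomologicalComplex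
          (ComplexShape.down ℤ)).obj C).ExactAt k) := by
  intro j k
  set B := LaurentPolynomial F
  set ψ := laurentToRatFunc F with hψ
  set φ := laurentVar F n j with hφ
  set S := C.sc k with hS
  set S' := S.map (ModuleCat.restrictScalars φ) with hS'
  rw [HomologicalComplex.exactAt_iff]
  have hre : ((((ModuleCat.restrictScalars φ ⋙
        ModuleCat.extendScalars ψ).mapHomologicalComplex
          (ComplexShape.down ℤ)).obj C).sc k) = S'.map (ModuleCat.extendScalars ψ) := rfl
  rw [hre, ShortComplex.moduleCat_exact_iff]
  intro x hx
  set Kr := (ModuleCat.restrictScalars ψ).obj (ModuleCat.of _ (RatFunc F)) with hKr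
  -- bridge between category map and lTensor
  have bridge : ∀ (N₁ N₂ : ModuleCat B) (u : N₁ ⟶ N₂)
      (y : TensorProduct B Kr N₁),
      ((ModuleCat.extendScalars ψ).map u) y = (LinearMap.lTensor Kr u.hom) y := by
    intro N₁ N₂ u y
    induction y using TensorProduct.induction_on with
    | zero => erw [map_zero]
    | tmul s m => rfl
    | add y₁ y₂ h₁ h₂ => erw [map_add]
  -- the annihilator
  obtain ⟨q, hq0, hqann⟩ := ann F n j (C.homology k) (hfd k)
  set τ := S'.moduleCatToCycles with hτ
  -- subsingleton of tensored homology
  haveI hsub : Subsingleton (TensorProduct B Kr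
      (↥(LinearMap.ker S'.g.hom) ⧸ LinearMap.range τ)) := by
    have hψq : ψ q ≠ 0 := fun h => hq0 (lr_injective F (by rw [h, map_zero]))
    refine tensor_zero (B := B) (↑Kr) _ q ?_ ?_
    · intro y
      refine ⟨(show RatFunc F from (ψ q)⁻¹ * (show RatFunc F from y)), ?_⟩
      show ((ψ q) * ((ψ q)⁻¹ * (show RatFunc F from y)) : RatFunc F) = (show RatFunc F from y)
      rw [← mul_assoc, mul_inv_cancel₀ hψq, one_mul]
    · -- q annihilates the concrete homology
      intro m
      let E : S'.moduleCatLeftHomologyData.H ≅ (ModuleCat.restrictScalars φ).obj S.homology :=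
        S'.moduleCatHomologyIso.symm ≪≫ S.mapHomologyIso (ModuleCat.restrictScalars φ)
      have hm : E.inv (E.hom m) = m := by
        change (E.hom ≫ E.inv) m = m
        rw [E.hom_inv_id]
        rfl
      have h2 : q • (E.hom m) = 0 := by
        show φ q • (E.hom m : S.homology) = 0
        exact hqann _
      rw [← hm]
      exact (E.inv.hom.map_smul q (E.hom m)).symm.trans (by rw [h2, map_zero]; rfl)
  -- exact sequences after tensoring
  haveI hflat : Module.Flat B Kr := krFlat F
  have e1 : Function.Exact (LinearMap.lTensor Kr (LinearMap.ker S'.g.hom).subtype)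
      (LinearMap.lTensor Kr S'.g.hom) :=
    Module.Flat.lTensor_exact Kr (LinearMap.exact_subtype_ker_map S'.g.hom)
  have e2 : Function.Exact (LinearMap.lTensor Kr τ)
      (LinearMap.lTensor Kr (LinearMap.range τ).mkQ) :=
    Module.Flat.lTensor_exact Kr (LinearMap.exact_map_mkQ_range τ)
  -- x is in the kernel
  have hx' : LinearMap.lTensor Kr S'.g.hom x = 0 := by
    exact (bridge _ _ S'.g x).symm.trans hx
  obtain ⟨z, hz⟩ := (e1 x).mp hx'
  obtain ⟨y, hy⟩ := (e2 z).mp (Subsingleton.elim _ _)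
  refine ⟨y, ?_⟩
  show ((ModuleCat.extendScalars ψ).map S'.f) y = x
  rw [bridge]
  have hcomp : S'.f.hom = (LinearMap.ker S'.g.hom).subtype ∘ₗ τ :=
    LinearMap.ext fun v => rfl
  rw [hcomp, LinearMap.lTensor_comp, LinearMap.comp_apply, hy, hz]
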